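/- Let S be a K-algebra with a pseudo-degree function χ, let a ∈ S with χ(a) > 0 be such that C_S(a) satisfies condition D(ℓ) for some ℓ > 0, and let b₁ = 1, b₂, b₃, … be a sequence in C_S(a) where each b_{k+1} is chosen with χ(b_{k+1}) minimal subject to b_{k+1} not lying in the K[a]-span of {b₁,…,b_k}. Then for any φ₁,…,φ_k ∈ K[a], one has χ(Σᵢ φᵢ bᵢ) = maxᵢ (χ(φᵢ) + χ(bᵢ)). -/

import Mathlib

open Polynomial

/-- A pseudo-degree function on a ring `S`: a valuation-like map
`χ : S → ℤ ∪ {-∞}` with `χ a = -∞ ↔ a = 0`, `χ (ab) = χ a + χ b` and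
`χ (a+b) ≤ max (χ a) (χ b)`. -/
structure IsPseudoDegree {S : Type*} [Ring S] (χ : S → WithBot ℤ) : Prop where
  eq_bot_iff : ∀ a : S, χ a = ⊥ ↔ a = 0
  map_mul : ∀ a b : S, χ (a * b) = χ a + χ b
  add_le : ∀ a b : S, χ (a + b) ≤ max (χ a) (χ b)

section Helpers
variable {S : Type*} [Ring S] {χ : S → WithBot ℤ}

lemma psd_zero (hχ : IsPseudoDegree χ) : χ 0 = ⊥ := (hχ.eq_bot_iff 0).2 rfl

lemma psd_one (hχ : IsPseudoDegree χ) (h1 : (1:S) ≠ 0) : χ 1 = 0 := by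
  have h := hχ.map_mul 1 1
  rw [one_mul] at h
  have hb : χ 1 ≠ ⊥ := fun hb => h1 ((hχ.eq_bot_iff 1).1 hb)
  lift (χ 1) to ℤ using hb with n hn
  have hn0 : n = n + n := by exact_mod_cast h
  have : n = 0 := by omega
  simp [this]

lemma psd_neg (hχ : IsPseudoDegree χ) (h1 : (1:S) ≠ 0) (x : S) : χ (-x) = χ x := by
  have hm1 : χ (-1 : S) = 0 := by
    have h := hχ.map_mul (-1) (-1)
    rw [neg_one_mul, neg_neg, psd_one hχ h1] at h
    have hb : χ (-1 : S) ≠ ⊥ := fun hb => by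
      have := (hχ.eq_bot_iff (-1)).1 hb
      exact h1 (by simpa using congrArg Neg.neg this)
    lift (χ (-1:S)) to ℤ using hb with n hn
    have hn0 : (0:ℤ) = n + n := by exact_mod_cast h
    have : n = 0 := by omega
    simp [this]
  calc χ (-x) = χ ((-1) * x) := by rw [neg_one_mul]
    _ = χ (-1:S) + χ x := hχ.map_mul _ _
    _ = χ x := by rw [hm1, zero_add]

lemma psd_add_eq (hχ : IsPseudoDegree χ) (h1 : (1:S) ≠ 0) {x y : S} (h : χ y < χ x) :
    χ (x + y) = χ x := by
  refine le_antisymm ((hχ.add_le x y).trans (by rw [max_eq_left h.le])) ?_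
  have h2 : χ x ≤ max (χ (x + y)) (χ y) := by
    have h3 := hχ.add_le (x+y) (-y)
    rw [psd_neg hχ h1, add_neg_cancel_right] at h3
    exact h3
  rcases max_cases (χ (x+y)) (χ y) with ⟨he, _⟩ | ⟨he, _⟩
  · rwa [he] at h2
  · rw [he] at h2; exact absurd (h2.trans_lt h) (lt_irrefl _)

lemma psd_sum_le (hχ : IsPseudoDegree χ) {ι : Type*} (s : Finset ι) (f : ι → S) :
    χ (∑ i ∈ s, f i) ≤ s.sup (fun i => χ (f i)) := by
  classical
  induction s using Finset.induction_on with
  | empty => simp [psd_zero hχ]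
  | insert _ _ hni ih =>
    rename_i c s
    rw [Finset.sum_insert hni, Finset.sup_insert]
    exact (hχ.add_le _ _).trans (max_le_max le_rfl ih)

lemma psd_sub_lt (hχ : IsPseudoDegree χ) (h1 : (1:S) ≠ 0) {x y : S} {M : WithBot ℤ}
    (hx : χ x < M) (hy : χ y < M) : χ (x - y) < M := by
  have h3 := hχ.add_le x (-y)
  rw [psd_neg hχ h1] at h3
  rw [sub_eq_add_neg]
  exact h3.trans_lt (max_lt hx hy)
end Helpers

section H2
variable {K S : Type*} [Field K] [Ring S] [Algebra K S] {χ : S → WithBot ℤ}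
variable {a : S} {A : ℤ}

lemma psd_pow (hχ : IsPseudoDegree χ) (h1 : (1:S) ≠ 0) (hA : χ a = (A:ℤ)) (n : ℕ) :
    χ (a ^ n) = ((n * A : ℤ) : WithBot ℤ) := by
  induction n with
  | zero => simpa using psd_one hχ h1
  | succ n ih =>
    rw [pow_succ, hχ.map_mul, ih, hA]
    have : ((n:ℤ) * A + A) = ((n+1 : ℕ) : ℤ) * A := by push_cast; ring
    exact_mod_cast this

lemma psd_aeval_le (hχ : IsPseudoDegree χ) (h1 : (1:S) ≠ 0) (hA : χ a = (A:ℤ)) (hA0 : 0 ≤ A)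
    (halg : ∀ α : K, α ≠ 0 → χ (algebraMap K S α) = 0) (φ : Polynomial K) :
    χ (aeval a φ) ≤ ((φ.natDegree * A : ℤ) : WithBot ℤ) := by
  rw [aeval_eq_sum_range]
  refine (psd_sum_le hχ _ _).trans (Finset.sup_le fun i hi => ?_)
  by_cases hc : φ.coeff i = 0
  · simp [hc, psd_zero hχ]
  · rw [Algebra.smul_def, hχ.map_mul, halg _ hc, psd_pow hχ h1 hA, zero_add]
    rw [Finset.mem_range] at hi
    have hi' : i ≤ φ.natDegree := by omega
    exact_mod_cast mul_le_mul_of_nonneg_right (by exact_mod_cast hi' : (i:ℤ) ≤ φ.natDegree) hA0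

lemma psd_aeval_erase_lt (hχ : IsPseudoDegree χ) (h1 : (1:S) ≠ 0) (hA : χ a = (A:ℤ)) (hA0 : 0 < A)
    (halg : ∀ α : K, α ≠ 0 → χ (algebraMap K S α) = 0) {φ : Polynomial K} (hφ : φ ≠ 0) :
    χ (aeval a φ.eraseLead) < ((φ.natDegree * A : ℤ) : WithBot ℤ) := by
  by_cases he : φ.eraseLead = 0
  · rw [he, map_zero, psd_zero hχ]; exact WithBot.bot_lt_coe _
  · refine (psd_aeval_le hχ h1 hA hA0.le halg _).trans_lt ?_
    have hd : φ.eraseLead.natDegree < φ.natDegree :=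
      Polynomial.natDegree_lt_natDegree he (Polynomial.degree_eraseLead_lt hφ)
    exact_mod_cast mul_lt_mul_of_pos_right (by exact_mod_cast hd) hA0

lemma psd_aeval_eq (hχ : IsPseudoDegree χ) (h1 : (1:S) ≠ 0) (hA : χ a = (A:ℤ)) (hA0 : 0 < A)
    (halg : ∀ α : K, α ≠ 0 → χ (algebraMap K S α) = 0) {φ : Polynomial K} (hφ : φ ≠ 0) :
    χ (aeval a φ) = ((φ.natDegree * A : ℤ) : WithBot ℤ) := by
  have key : aeval a φ = (algebraMap K S φ.leadingCoeff) * a ^ φ.natDegree + aeval a φ.eraseLead := by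
    conv_lhs => rw [← Polynomial.eraseLead_add_C_mul_X_pow φ]
    rw [map_add, map_mul, aeval_C, map_pow, aeval_X, add_comm]
  have hlt : χ ((algebraMap K S φ.leadingCoeff) * a ^ φ.natDegree) = ((φ.natDegree * A : ℤ) : WithBot ℤ) := by
    rw [hχ.map_mul, halg _ (Polynomial.leadingCoeff_ne_zero.2 hφ), psd_pow hχ h1 hA, zero_add]
  rw [key, psd_add_eq hχ h1 (by rw [hlt]; exact psd_aeval_erase_lt hχ h1 hA hA0 halg hφ), hlt]
end H2
def InSpanAux (K : Type*) {S : Type*} [Field K] [Ring S] [Algebra K S]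
    (a : S) (b : ℕ → S) (m : ℕ) (c : S) : Prop :=
  ∃ ψ : ℕ → Polynomial K, c = ∑ i ∈ Finset.range m, Polynomial.aeval a (ψ i) * b i

lemma inSpanAux_iff {K S : Type*} [Field K] [Ring S] [Algebra K S]
    (a : S) (b : ℕ → S) (k : ℕ) (c : S) :
    InSpanAux K a b (k+1) c ↔
      ∃ φ : Fin (k + 1) → Polynomial K, c = ∑ i, Polynomial.aeval a (φ i) * b i.val := by
  constructor
  · rintro ⟨ψ, rfl⟩
    exact ⟨fun i => ψ i.val, by rw [Fin.sum_univ_eq_sum_range (fun n => aeval a (ψ n) * b n)]⟩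
  · rintro ⟨φ, rfl⟩
    refine ⟨fun n => if h : n < k + 1 then φ ⟨n, h⟩ else 0, ?_⟩
    rw [← Fin.sum_univ_eq_sum_range (fun n => aeval a (if h : n < k + 1 then φ ⟨n, h⟩ else 0) * b n)]
    exact Finset.sum_congr rfl fun i _ => by rw [dif_pos i.isLt]

lemma inSpanAux_mono {K S : Type*} [Field K] [Ring S] [Algebra K S]
    (a : S) (b : ℕ → S) {m m' : ℕ} (h : m ≤ m') {c : S}
    (hc : InSpanAux K a b m c) : InSpanAux K a b m' c := by
  obtain ⟨ψ, rfl⟩ := hc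
  refine ⟨fun n => if n < m then ψ n else 0, ?_⟩
  rw [← Finset.sum_subset (Finset.range_subset_range.2 h)
    (f := fun i => aeval a (if i < m then ψ i else 0) * b i)]
  · exact Finset.sum_congr rfl fun i hi => by rw [if_pos (Finset.mem_range.1 hi)]
  · intro x _ hx
    rw [if_neg (fun hlt => hx (Finset.mem_range.2 hlt)), map_zero, zero_mul]

/-- Condition `D(ℓ)` for a subalgebra `B` of `S`: every nonzero element of `B`
has `χ`-value `≥ 0`, and any `ℓ+1` elements of `B` all mapped to the same
integer by `χ` admit a nontrivial `K`-linear combination of strictly smaller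
`χ`-value. -/
def CondD {K S : Type*} [Field K] [Ring S] [Algebra K S] (χ : S → WithBot ℤ)
    (B : Subalgebra K S) (ℓ : ℕ) : Prop :=
  (∀ b ∈ B, b ≠ 0 → 0 ≤ χ b) ∧
  ∀ b : Fin (ℓ + 1) → S, (∀ i, b i ∈ B) → (∀ i, χ (b i) = χ (b 0)) → χ (b 0) ≠ ⊥ →
    ∃ α : Fin (ℓ + 1) → K, α ≠ 0 ∧ χ (∑ i, α i • b i) < χ (b 0)

theorem stmt5 {K S : Type*} [Field K] [Ring S] [Algebra K S]
    (χ : S → WithBot ℤ) (hχ : IsPseudoDegree χ)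
    (a : S) (ha : 0 < χ a) (ℓ : ℕ) (hℓ : 0 < ℓ)
    (hD : CondD χ (Subalgebra.centralizer K {a}) ℓ)
    (b : ℕ → S) (hb1 : b 0 = 1)
    (hbC : ∀ k : ℕ, b k ∈ Subalgebra.centralizer K {a})
    (hnot : ∀ k : ℕ, ¬ ∃ φ : Fin (k + 1) → Polynomial K,
      b (k + 1) = ∑ i, Polynomial.aeval a (φ i) * b i.val)
    (hmin : ∀ k : ℕ, ∀ c ∈ Subalgebra.centralizer K {a},
      (¬ ∃ φ : Fin (k + 1) → Polynomial K,
        c = ∑ i, Polynomial.aeval a (φ i) * b i.val) →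
      χ (b (k + 1)) ≤ χ c) :
    ∀ k : ℕ, ∀ φ : Fin k → Polynomial K,
      χ (∑ i, Polynomial.aeval a (φ i) * b i.val)
        = Finset.univ.sup (fun i => χ (Polynomial.aeval a (φ i)) + χ (b i.val)) := by
  classical
  -- basic nontriviality
  have habot : χ a ≠ ⊥ := fun h => by rw [h] at ha; exact not_lt_bot ha
  have hane : a ≠ 0 := fun h => habot ((hχ.eq_bot_iff a).2 h)
  have h1 : (1:S) ≠ 0 := fun h => hane (by rw [← mul_one a, h, mul_zero])
  have : Nontrivial S := ⟨⟨1, 0, h1⟩⟩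
  obtain ⟨A, hA⟩ := WithBot.ne_bot_iff_exists.1 habot
  have hA := hA.symm
  have hA0 : 0 < A := by rw [hA] at ha; exact_mod_cast ha
  -- algebraMap has value 0
  have halg : ∀ α : K, α ≠ 0 → χ (algebraMap K S α) = 0 := by
    intro α hα
    have hmem : ∀ β : K, algebraMap K S β ∈ Subalgebra.centralizer K {a} :=
      fun β => Subalgebra.algebraMap_mem _ β
    have hne : ∀ β : K, β ≠ 0 → algebraMap K S β ≠ 0 := fun β hβ h =>
      hβ ((algebraMap K S).injective (by rw [h, map_zero]))
    have h01 : 0 ≤ χ (algebraMap K S α) := hD.1 _ (hmem α) (hne α hα)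
    have h02 : 0 ≤ χ (algebraMap K S α⁻¹) := hD.1 _ (hmem α⁻¹) (hne α⁻¹ (inv_ne_zero hα))
    have hsum : χ (algebraMap K S α) + χ (algebraMap K S α⁻¹) = 0 := by
      rw [← hχ.map_mul, ← map_mul, mul_inv_cancel₀ hα, map_one, psd_one hχ h1]
    lift χ (algebraMap K S α) to ℤ using (fun h => by simp [h] at h01) with x hx
    lift χ (algebraMap K S α⁻¹) to ℤ using (fun h => by simp [h] at h02) with y hy
    have hx0 : (0:ℤ) ≤ x := by exact_mod_cast h01
    have hy0 : (0:ℤ) ≤ y := by exact_mod_cast h02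
    have hxy : x + y = 0 := by exact_mod_cast hsum
    have : x = 0 := by omega
    exact_mod_cast this
  -- b's are nonzero
  have hbne : ∀ j, b j ≠ 0 := by
    intro j
    cases j with
    | zero => rw [hb1]; exact h1
    | succ j =>
      intro h
      exact hnot j ⟨0, by simp [h]⟩
  have hb0le : ∀ j, 0 ≤ χ (b j) := fun j => hD.1 _ (hbC j) (hbne j)
  have hbbot : ∀ j, χ (b j) ≠ ⊥ := fun j h => hbne j ((hχ.eq_bot_iff _).1 h)
  -- translated hypotheses
  have hnot' : ∀ k : ℕ, ¬ InSpanAux K a b (k+1) (b (k+1)) :=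
    fun k h => hnot k ((inSpanAux_iff a b k _).1 h)
  have hmin' : ∀ k : ℕ, ∀ c, c ∈ Subalgebra.centralizer K {a} →
      ¬ InSpanAux K a b (k+1) c → χ (b (k + 1)) ≤ χ c :=
    fun k c hc h => hmin k c hc (fun hex => h ((inSpanAux_iff a b k c).2 hex))
  -- monotonicity of χ ∘ b
  have hmono : ∀ i j : ℕ, i ≤ j → χ (b i) ≤ χ (b j) := by
    intro i j hij
    cases i with
    | zero => rw [hb1, psd_one hχ h1]; exact hb0le j
    | succ i' =>
      obtain ⟨j', rfl⟩ : ∃ j', j = j' + 1 := ⟨j - 1, by omega⟩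
      refine hmin' i' _ (hbC _) (fun hsp => hnot' j' ?_)
      exact inSpanAux_mono a b (by omega) hsp
  -- main lemma in ℕ-indexed form
  have main : ∀ (m : ℕ) (ψ : ℕ → Polynomial K),
      χ (∑ i ∈ Finset.range m, aeval a (ψ i) * b i)
        = (Finset.range m).sup (fun i => χ (aeval a (ψ i)) + χ (b i)) := by
    intro m ψ
    set f : ℕ → S := fun i => aeval a (ψ i) * b i with hf
    have hsup_eq : (Finset.range m).sup (fun i => χ (f i))
        = (Finset.range m).sup (fun i => χ (aeval a (ψ i)) + χ (b i)) :=
      Finset.sup_congr rfl (fun i _ => hχ.map_mul _ _)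
    have hle : χ (∑ i ∈ Finset.range m, f i)
        ≤ (Finset.range m).sup (fun i => χ (aeval a (ψ i)) + χ (b i)) :=
      (psd_sum_le hχ _ _).trans_eq hsup_eq
    rcases eq_or_lt_of_le hle with heq | hlt
    · exact heq
    exfalso
    set M := (Finset.range m).sup (fun i => χ (aeval a (ψ i)) + χ (b i)) with hMdef
    have hMbot : M ≠ ⊥ := fun h => by rw [h] at hlt; exact not_lt_bot hlt
    have hMpos : (⊥ : WithBot ℤ) < M := bot_lt_iff_ne_bot.2 hMbot
    set T := (Finset.range m).filter (fun i => χ (aeval a (ψ i)) + χ (b i) = M) with hT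
    have hrne : (Finset.range m).Nonempty := by
      by_contra hcon
      rw [Finset.not_nonempty_iff_eq_empty] at hcon
      exact hMbot (by rw [hMdef, hcon, Finset.sup_empty])
    obtain ⟨i₀, hi₀, hsup⟩ := Finset.exists_mem_eq_sup (Finset.range m) hrne
      (fun i => χ (aeval a (ψ i)) + χ (b i))
    have hTne : T.Nonempty := ⟨i₀, Finset.mem_filter.2 ⟨hi₀, hsup.symm⟩⟩
    have hψT : ∀ i ∈ T, ψ i ≠ 0 := by
      intro i hi h0
      have h2 := (Finset.mem_filter.1 hi).2
      rw [h0, map_zero, psd_zero hχ, WithBot.bot_add] at h2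
      exact hMbot h2.symm
    set t := T.max' hTne with htdef
    have htT : t ∈ T := T.max'_mem hTne
    have hletop : ∀ i ∈ T, i ≤ t := fun i hi => Finset.le_max' T i hi
    set d : ℕ → ℕ := fun i => (ψ i).natDegree with hd
    have hval : ∀ i ∈ T, ((d i * A : ℤ) : WithBot ℤ) + χ (b i) = M := by
      intro i hi
      have h2 := (Finset.mem_filter.1 hi).2
      rwa [psd_aeval_eq hχ h1 hA hA0 halg (hψT i hi)] at h2
    have hdt : ∀ i ∈ T, d t ≤ d i := by
      intro i hi
      have h2 := hval i hi
      have h3 := hval t htT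
      have h4 := hmono i t (hletop i hi)
      lift M to ℤ using hMbot with Mi hMi
      lift χ (b i) to ℤ using hbbot i with Bi hBi
      lift χ (b t) to ℤ using hbbot t with Bt hBt
      have e2 : (d i : ℤ) * A + Bi = Mi := by exact_mod_cast h2
      have e3 : (d t : ℤ) * A + Bt = Mi := by exact_mod_cast h3
      have e4 : Bi ≤ Bt := by exact_mod_cast h4
      have : (d t : ℤ) ≤ (d i : ℤ) := by nlinarith
      exact_mod_cast this
    set w := ∑ i ∈ T, algebraMap K S ((ψ i).leadingCoeff) * (a ^ (d i - d t) * b i) with hw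
    have hu : a ^ (d t) * w = ∑ i ∈ T, algebraMap K S ((ψ i).leadingCoeff) * (a ^ (d i) * b i) := by
      rw [hw, Finset.mul_sum]
      refine Finset.sum_congr rfl fun i hi => ?_
      have hdd : d t + (d i - d t) = d i := by have := hdt i hi; omega
      rw [← mul_assoc, ← Algebra.commutes ((ψ i).leadingCoeff) (a ^ d t), mul_assoc,
        ← mul_assoc (a ^ d t), ← pow_add, hdd]
    have hsplit : (∑ i ∈ Finset.range m, f i) - a ^ (d t) * w
        = (∑ i ∈ T, aeval a ((ψ i).eraseLead) * b i)
          + ∑ i ∈ (Finset.range m).filter (fun i => ¬ (χ (aeval a (ψ i)) + χ (b i) = M)), f i := by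
      rw [hu, ← Finset.sum_filter_add_sum_filter_not (Finset.range m)
        (fun i => χ (aeval a (ψ i)) + χ (b i) = M) f, ← hT, add_sub_right_comm,
        ← Finset.sum_sub_distrib]
      congr 1
      refine Finset.sum_congr rfl fun i hi => ?_
      have e : aeval a (ψ i)
          = aeval a ((ψ i).eraseLead) + algebraMap K S ((ψ i).leadingCoeff) * a ^ (d i) := by
        conv_lhs => rw [← Polynomial.eraseLead_add_C_mul_X_pow (ψ i)]
        rw [map_add, map_mul, aeval_C, map_pow, aeval_X]
      show aeval a (ψ i) * b i - _ = _
      rw [e, add_mul, mul_assoc, add_sub_cancel_right]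
    have herase_lt : χ (∑ i ∈ T, aeval a ((ψ i).eraseLead) * b i) < M := by
      refine (psd_sum_le hχ _ _).trans_lt ((Finset.sup_lt_iff hMpos).2 fun i hi => ?_)
      rw [hχ.map_mul, ← hval i hi]
      exact WithBot.add_lt_add_right (hbbot i) (psd_aeval_erase_lt hχ h1 hA hA0 halg (hψT i hi))
    have hrest_lt : χ (∑ i ∈ (Finset.range m).filter
        (fun i => ¬ (χ (aeval a (ψ i)) + χ (b i) = M)), f i) < M := by
      refine (psd_sum_le hχ _ _).trans_lt ((Finset.sup_lt_iff hMpos).2 fun i hi => ?_)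
      obtain ⟨him, hne⟩ := Finset.mem_filter.1 hi
      rw [hf]
      show χ (aeval a (ψ i) * b i) < M
      rw [hχ.map_mul]
      exact lt_of_le_of_ne (Finset.le_sup (f := fun i => χ (aeval a (ψ i)) + χ (b i)) him) hne
    have hsub_lt : χ ((∑ i ∈ Finset.range m, f i) - a ^ (d t) * w) < M := by
      rw [hsplit]
      exact (hχ.add_le _ _).trans_lt (max_lt herase_lt hrest_lt)
    have hu_lt : χ (a ^ (d t) * w) < M := by
      have e : a ^ (d t) * w = (∑ i ∈ Finset.range m, f i)
          - ((∑ i ∈ Finset.range m, f i) - a ^ (d t) * w) := (sub_sub_cancel _ _).symm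
      rw [e]
      exact psd_sub_lt hχ h1 hlt hsub_lt
    have hw_lt : χ w < χ (b t) := by
      by_contra hcon
      push_neg at hcon
      have hge : M ≤ χ (a ^ (d t) * w) := by
        rw [hχ.map_mul, psd_pow hχ h1 hA, ← hval t htT]
        exact add_le_add_right hcon _
      exact absurd (hge.trans_lt hu_lt) (lt_irrefl _)
    rcases Nat.eq_zero_or_pos t with ht0 | htpos
    · -- t = 0 : T = {0}, χ w = χ (b t), contradiction
      have hTsing : T = {0} := Finset.eq_singleton_iff_unique_mem.2
        ⟨ht0 ▸ htT, fun x hx => by have := hletop x hx; omega⟩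
      have hweq : χ w = χ (b t) := by
        rw [hw, hTsing, Finset.sum_singleton, ht0, Nat.sub_self, pow_zero, one_mul,
          hχ.map_mul, halg _ (Polynomial.leadingCoeff_ne_zero.2 (hψT 0 (ht0 ▸ htT))), zero_add]
      rw [hweq] at hw_lt
      exact absurd hw_lt (lt_irrefl _)
    · obtain ⟨t', ht'⟩ : ∃ t', t = t' + 1 := ⟨t - 1, by omega⟩
      have haC : a ∈ Subalgebra.centralizer K {a} :=
        (Subalgebra.mem_centralizer_iff K).2 (fun g hg => by rw [Set.mem_singleton_iff.1 hg])
      have hwC : w ∈ Subalgebra.centralizer K {a} := by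
        rw [hw]
        exact Subalgebra.sum_mem _ fun i _ => Subalgebra.mul_mem _
          (Subalgebra.algebraMap_mem _ _)
          (Subalgebra.mul_mem _ (Subalgebra.pow_mem _ haC _) (hbC i))
      have hlct : (ψ t).leadingCoeff ≠ 0 := Polynomial.leadingCoeff_ne_zero.2 (hψT t htT)
      have hwnot : ¬ InSpanAux K a b (t' + 1) w := by
        rintro ⟨ψ₂, hw2⟩
        apply hnot' t'
        refine ⟨fun j => Polynomial.C ((ψ t).leadingCoeff)⁻¹ *
          (ψ₂ j - if j ∈ T.erase t then
            Polynomial.C ((ψ j).leadingCoeff) * Polynomial.X ^ (d j - d t) else 0), ?_⟩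
        have hstep : ∀ j, aeval a (Polynomial.C ((ψ t).leadingCoeff)⁻¹ *
            (ψ₂ j - if j ∈ T.erase t then
              Polynomial.C ((ψ j).leadingCoeff) * Polynomial.X ^ (d j - d t) else 0)) * b j
            = algebraMap K S ((ψ t).leadingCoeff)⁻¹ * (aeval a (ψ₂ j) * b j -
              (if j ∈ T.erase t then
                algebraMap K S ((ψ j).leadingCoeff) * (a ^ (d j - d t) * b j) else 0)) := by
          intro j
          split_ifs with hj <;>
            simp [map_mul, map_sub, aeval_C, map_pow, aeval_X, sub_mul, mul_assoc]
        have hsub : T.erase t ⊆ Finset.range (t' + 1) := by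
          intro i hi
          obtain ⟨hne, hiT⟩ := Finset.mem_erase.1 hi
          have := hletop i hiT
          exact Finset.mem_range.2 (by omega)
        have herase_eq : ∑ j ∈ Finset.range (t' + 1), (if j ∈ T.erase t then
            algebraMap K S ((ψ j).leadingCoeff) * (a ^ (d j - d t) * b j) else 0)
            = ∑ i ∈ T.erase t, algebraMap K S ((ψ i).leadingCoeff) * (a ^ (d i - d t) * b i) := by
          rw [Finset.sum_ite_mem, Finset.inter_eq_right.2 hsub]
        have hw_split : w - ∑ i ∈ T.erase t,
            algebraMap K S ((ψ i).leadingCoeff) * (a ^ (d i - d t) * b i)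
            = algebraMap K S ((ψ t).leadingCoeff) * b t := by
          rw [hw, ← Finset.add_sum_erase T _ htT, add_sub_cancel_right, Nat.sub_self,
            pow_zero, one_mul]
        have : ∑ j ∈ Finset.range (t' + 1), aeval a (Polynomial.C ((ψ t).leadingCoeff)⁻¹ *
            (ψ₂ j - if j ∈ T.erase t then
              Polynomial.C ((ψ j).leadingCoeff) * Polynomial.X ^ (d j - d t) else 0)) * b j
            = b t := by
          rw [Finset.sum_congr rfl fun j _ => hstep j, ← Finset.mul_sum,
            Finset.sum_sub_distrib, herase_eq, ← hw2, hw_split, ← mul_assoc, ← map_mul,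
            inv_mul_cancel₀ hlct, map_one, one_mul]
        rw [this, ← ht']
      have hfin := hmin' t' w hwC hwnot
      rw [← ht'] at hfin
      exact absurd (hfin.trans_lt hw_lt) (lt_irrefl _)

  -- conversion to Fin-indexed form
  intro k φ
  set ψ : ℕ → Polynomial K := fun n => if h : n < k then φ ⟨n, h⟩ else 0 with hψ
  have hψval : ∀ i : Fin k, ψ i.val = φ i := fun i => by simp [hψ, i.isLt]
  have e1 : ∑ i : Fin k, aeval a (φ i) * b i.val = ∑ i ∈ Finset.range k, aeval a (ψ i) * b i := by
    rw [← Fin.sum_univ_eq_sum_range (fun n => aeval a (ψ n) * b n) k]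
    exact Finset.sum_congr rfl fun i _ => by rw [hψval i]
  have e2 : Finset.univ.sup (fun i : Fin k => χ (aeval a (φ i)) + χ (b i.val))
      = (Finset.range k).sup (fun i => χ (aeval a (ψ i)) + χ (b i)) := by
    refine le_antisymm (Finset.sup_le fun i _ => ?_) (Finset.sup_le fun i hi => ?_)
    · rw [← hψval i]; exact Finset.le_sup (f := fun n => χ (aeval a (ψ n)) + χ (b n)) (Finset.mem_range.2 i.isLt)
    · have hik := Finset.mem_range.1 hi
      have : ψ i = φ ⟨i, hik⟩ := hψval ⟨i, hik⟩
      rw [this]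
      exact Finset.le_sup (f := fun i : Fin k => χ (aeval a (φ i)) + χ (b i.val))
        (Finset.mem_univ (⟨i, hik⟩ : Fin k))
  rw [e1, e2]
  exact main k ψ
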